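/- Let f be the base density as above (with a = 2ln(27/16)) and let (S,B) have density f on [0,1]^2. Then for p ∈ (1/6, 1/2], E[(B−S)·1{S ≤ p ≤ B}] = (2 + 13a)/(6(1+8a)); for p ∈ (1/2, 2/3], E[(B−S)·1{S ≤ p ≤ B}] = (−18a p² + 3a p + 2(1+8a))/(6(1+8a)); and for p ∈ (2/3, 5/6], E[(B−S)·1{S ≤ p ≤ B}] = (−18p² + 15p + 10a)/(6(1+8a)). -/

import Mathlib

open MeasureTheory Set

/-- The normalization constant a = 2·ln(27/16). -/
noncomputable def aNorm : ℝ := 2 * Real.log (27 / 16)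

/-- The base density f of the hard instance construction. -/
noncomputable def baseDensity : ℝ × ℝ → ℝ := fun z =>
  (36 / (1 + 8 * aNorm)) *
    ((Set.Icc (0:ℝ) (1/6) ×ˢ Set.Ico (1/3:ℝ) (1/2)).indicator
        (fun w => (5 - 6 * (w.2 + w.1)) / (6 * (w.2 - w.1))) z
      + aNorm * (Set.Icc (0:ℝ) (1/6) ×ˢ Set.Icc (1/2:ℝ) (2/3)).indicator
          (fun _ => (1:ℝ)) z
      + 2 * aNorm * ((Set.Icc (0:ℝ) (1/6) ×ˢ Set.Icc (5/6:ℝ) 1)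
          ∪ (Set.Icc (5/6:ℝ) 1 ×ˢ Set.Icc (5/6:ℝ) 1)
          ∪ (Set.Icc (5/6:ℝ) 1 ×ˢ Set.Icc (0:ℝ) (1/6))).indicator
          (fun _ => (1:ℝ)) z
      + (Set.Icc (1/3:ℝ) (1/2) ×ˢ Set.Icc (2/3:ℝ) (5/6)).indicator
          (fun _ => (1:ℝ)) z)

/-- Expected gain from trade at price p for valuations with density `baseDensity`. -/
noncomputable def expGFT (p : ℝ) : ℝ :=
  ∫ z : ℝ × ℝ, (z.2 - z.1) *
    ({w : ℝ × ℝ | w.1 ≤ p ∧ p ≤ w.2}.indicator (fun _ => (1:ℝ)) z) * baseDensity z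

lemma integral_linear (c d A B : ℝ) : ∫ t in c..d, (A + B * t) = A*(d-c) + B*(d^2-c^2)/2 := by
  rw [intervalIntegral.integral_add (g := fun t => B * t) intervalIntegrable_const
      ((continuous_const.mul continuous_id' : Continuous fun t : ℝ => B * t).intervalIntegrable _ _),
    intervalIntegral.integral_const, intervalIntegral.integral_const_mul]
  simp only [integral_id, smul_eq_mul]
  ring

lemma setIntegral_Icc_linear (c d A B : ℝ) (h : c ≤ d) :
    ∫ t in Icc c d, (A + B * t) = A*(d-c) + B*(d^2-c^2)/2 := by
  rw [integral_Icc_eq_integral_Ioc, ← intervalIntegral.integral_of_le h, integral_linear]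

lemma rectInt (a b c d A B C : ℝ) (hab : a ≤ b) (hcd : c ≤ d) :
    ∫ z : ℝ × ℝ, (Icc a b ×ˢ Icc c d).indicator (fun w => A + B * w.1 + C * w.2) z
      = (A*(d-c) + C*(d^2-c^2)/2)*(b-a) + B*(b^2-a^2)/2*(d-c) := by
  have hmeas : MeasurableSet (Icc a b ×ˢ Icc c d) := measurableSet_Icc.prod measurableSet_Icc
  have hcont : Continuous (fun w : ℝ × ℝ => A + B * w.1 + C * w.2) := by fun_prop
  have hint : IntegrableOn (fun w : ℝ × ℝ => A + B * w.1 + C * w.2) (Icc a b ×ˢ Icc c d)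
      (volume.prod volume) := by
    rw [← Measure.volume_eq_prod, Icc_prod_Icc]
    exact hcont.continuousOn.integrableOn_compact isCompact_Icc
  rw [integral_indicator hmeas]
  rw [show (volume : Measure (ℝ × ℝ)) = volume.prod volume from Measure.volume_eq_prod ℝ ℝ]
  rw [setIntegral_prod _ hint]
  have : ∀ x : ℝ, ∫ y in Icc c d, (A + B * x + C * y) = (A + B*x)*(d-c) + C*(d^2-c^2)/2 := by
    intro x
    simpa using setIntegral_Icc_linear c d (A + B * x) C hcd
  simp only [this]
  have := setIntegral_Icc_linear a b (A*(d-c) + C*(d^2-c^2)/2) (B*(d-c)) hab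
  rw [show (fun x : ℝ => (A + B*x)*(d-c) + C*(d^2-c^2)/2)
      = fun x : ℝ => (A*(d-c) + C*(d^2-c^2)/2) + (B*(d-c)) * x from funext fun x => by ring,
    this]
  ring

lemma rect_null_left (a b : ℝ) (h : b ≤ a) (t : Set ℝ) (ht : MeasurableSet t) (g : ℝ × ℝ → ℝ) :
    ∫ z : ℝ × ℝ, (Icc a b ×ˢ t).indicator g z = 0 := by
  rw [integral_indicator (measurableSet_Icc.prod ht),
    Measure.restrict_eq_zero.mpr, integral_zero_measure]
  rw [Measure.volume_eq_prod, Measure.prod_prod, Real.volume_Icc,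
    ENNReal.ofReal_eq_zero.mpr (by linarith)]
  exact zero_mul _

lemma ind_Ico (s : Set ℝ) (c d : ℝ) (g : ℝ × ℝ → ℝ) :
    ∫ z : ℝ × ℝ, (s ×ˢ Ico c d).indicator g z = ∫ z : ℝ × ℝ, (s ×ˢ Icc c d).indicator g z := by
  apply integral_congr_ae
  have hnull : (volume : Measure (ℝ × ℝ)) {z : ℝ × ℝ | z.2 = d} = 0 := by
    have he : {z : ℝ × ℝ | z.2 = d} = (univ : Set ℝ) ×ˢ ({d} : Set ℝ) := by
      ext z
      simp only [mem_setOf_eq, Set.mem_prod, mem_univ, mem_singleton_iff, true_and]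
    rw [he, Measure.volume_eq_prod, Measure.prod_prod]
    simp
  filter_upwards [measure_eq_zero_iff_ae_notMem.mp hnull] with z hz
  by_cases h1 : z ∈ s ×ˢ Ico c d
  · have h2 : z ∈ s ×ˢ Icc c d := ⟨h1.1, h1.2.1, le_of_lt h1.2.2⟩
    rw [indicator_of_mem h1, indicator_of_mem h2]
  · have h2 : z ∉ s ×ˢ Icc c d := by
      intro h; exact h1 ⟨h.1, h.2.1, lt_of_le_of_ne h.2.2 hz⟩
    rw [indicator_of_notMem h1, indicator_of_notMem h2]

lemma inter_Iic_full {p a b : ℝ} (h : b ≤ p) : Iic p ∩ Icc a b = Icc a b :=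
  inter_eq_right.mpr fun _ hx => le_trans hx.2 h
lemma inter_Ici_full {p c d : ℝ} (h : p ≤ c) : Ici p ∩ Icc c d = Icc c d :=
  inter_eq_right.mpr fun _ hx => le_trans h hx.1
lemma inter_Ico_full {p c d : ℝ} (h : p ≤ c) : Ici p ∩ Ico c d = Ico c d :=
  inter_eq_right.mpr fun _ hx => le_trans h hx.1
lemma inter_Iic_cut {p a b : ℝ} (h : p ≤ b) : Iic p ∩ Icc a b = Icc a p := by
  ext x; simp only [mem_inter_iff, mem_Iic, mem_Icc]
  constructor
  · rintro ⟨h1, h2, _⟩; exact ⟨h2, h1⟩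
  · rintro ⟨h1, h2⟩; exact ⟨h2, h1, h2.trans h⟩
lemma inter_Ici_cut {p c d : ℝ} (h : c ≤ p) : Ici p ∩ Icc c d = Icc p d := by
  ext x; simp only [mem_inter_iff, mem_Ici, mem_Icc]
  constructor
  · rintro ⟨h1, _, h3⟩; exact ⟨h1, h3⟩
  · rintro ⟨h1, h2⟩; exact ⟨h1, h.trans h1, h2⟩
lemma inter_Ico_cut {p c d : ℝ} (h : c ≤ p) : Ici p ∩ Ico c d = Ico p d := by
  ext x; simp only [mem_inter_iff, mem_Ici, mem_Ico]
  constructor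
  · rintro ⟨h1, _, h3⟩; exact ⟨h1, h3⟩
  · rintro ⟨h1, h2⟩; exact ⟨h1, h.trans h1, h2⟩
lemma inter_Ici_empty {p c d : ℝ} (h : d < p) : Ici p ∩ Icc c d = ∅ := by
  rw [eq_empty_iff_forall_notMem]; rintro x ⟨h1, _, h3⟩
  exact absurd (lt_of_le_of_lt h3 h) (not_lt.mpr h1)
lemma inter_Ico_empty {p c d : ℝ} (h : d ≤ p) : Ici p ∩ Ico c d = ∅ := by
  rw [eq_empty_iff_forall_notMem]; rintro x ⟨h1, _, h3⟩
  exact absurd (lt_of_lt_of_le h3 h) (not_lt.mpr h1)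

lemma integrable_piece (s t : Set ℝ) (hs : MeasurableSet s) (ht : MeasurableSet t)
    (a b c d : ℝ) (hsub : s ⊆ Icc a b) (htsub : t ⊆ Icc c d) (g : ℝ × ℝ → ℝ)
    (hg : Continuous g) :
    Integrable (fun z : ℝ × ℝ => (s ×ˢ t).indicator g z) := by
  rw [show (fun z : ℝ × ℝ => (s ×ˢ t).indicator g z) = (s ×ˢ t).indicator g from rfl,
    integrable_indicator_iff (hs.prod ht)]
  have : IntegrableOn g (Icc a b ×ˢ Icc c d) := by
    rw [Icc_prod_Icc]
    exact hg.continuousOn.integrableOn_compact isCompact_Icc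
  exact this.mono_set (prod_mono hsub htsub)

lemma trade_mul (p : ℝ) (R : Set (ℝ × ℝ)) (g : ℝ × ℝ → ℝ) (z : ℝ × ℝ) :
    (z.2 - z.1) * ((Iic p ×ˢ Ici p).indicator (fun _ => (1:ℝ)) z) * R.indicator g z
      = ((Iic p ×ˢ Ici p) ∩ R).indicator (fun w => (w.2 - w.1) * g w) z := by
  by_cases hT : z ∈ Iic p ×ˢ Ici p <;> by_cases hR : z ∈ R
  · rw [indicator_of_mem hT, indicator_of_mem hR, indicator_of_mem (mem_inter hT hR)]; ring
  · have hn : z ∉ (Iic p ×ˢ Ici p) ∩ R := fun h => hR h.2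
    rw [indicator_of_notMem hR, indicator_of_notMem hn, mul_zero]
  · have hn : z ∉ (Iic p ×ˢ Ici p) ∩ R := fun h => hT h.1
    rw [indicator_of_notMem hT, indicator_of_notMem hn]; ring
  · have hn : z ∉ (Iic p ×ˢ Ici p) ∩ R := fun h => hR h.2
    rw [indicator_of_notMem hR, indicator_of_notMem hn, mul_zero]

lemma integral_add6 (f1 f2 f3 f4 f5 f6 : ℝ × ℝ → ℝ)
    (h1 : Integrable f1) (h2 : Integrable f2) (h3 : Integrable f3)
    (h4 : Integrable f4) (h5 : Integrable f5) (h6 : Integrable f6) :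
    ∫ z : ℝ × ℝ, (f1 z + f2 z + f3 z + f4 z + f5 z + f6 z)
      = (∫ z, f1 z) + (∫ z, f2 z) + (∫ z, f3 z) + (∫ z, f4 z) + (∫ z, f5 z) + ∫ z, f6 z := by
  have g12 : Integrable (fun z : ℝ × ℝ => f1 z + f2 z) := by exact h1.add h2
  have g123 : Integrable (fun z : ℝ × ℝ => f1 z + f2 z + f3 z) := by exact g12.add h3
  have g1234 : Integrable (fun z : ℝ × ℝ => f1 z + f2 z + f3 z + f4 z) := by exact g123.add h4
  have g12345 : Integrable (fun z : ℝ × ℝ => f1 z + f2 z + f3 z + f4 z + f5 z) := by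
    exact g1234.add h5
  rw [integral_add g12345 h6, integral_add g1234 h5, integral_add g123 h4,
    integral_add g12 h3, integral_add h1 h2]

lemma expGFT_decomp (p : ℝ) :
    expGFT p = (36 / (1 + 8 * aNorm)) *
      ((∫ z : ℝ × ℝ, ((Iic p ∩ Icc 0 (1/6)) ×ˢ (Ici p ∩ Ico (1/3) (1/2))).indicator
          (fun w => 5/6 - w.1 - w.2) z)
        + aNorm * (∫ z : ℝ × ℝ, ((Iic p ∩ Icc 0 (1/6)) ×ˢ (Ici p ∩ Icc (1/2) (2/3))).indicator
            (fun w => w.2 - w.1) z)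
        + 2 * aNorm * (∫ z : ℝ × ℝ, ((Iic p ∩ Icc 0 (1/6)) ×ˢ (Ici p ∩ Icc (5/6) 1)).indicator
            (fun w => w.2 - w.1) z)
        + 2 * aNorm * (∫ z : ℝ × ℝ, ((Iic p ∩ Icc (5/6) 1) ×ˢ (Ici p ∩ Icc (5/6) 1)).indicator
            (fun w => w.2 - w.1) z)
        + 2 * aNorm * (∫ z : ℝ × ℝ, ((Iic p ∩ Icc (5/6) 1) ×ˢ (Ici p ∩ Icc 0 (1/6))).indicator
            (fun w => w.2 - w.1) z)
        + (∫ z : ℝ × ℝ, ((Iic p ∩ Icc (1/3) (1/2)) ×ˢ (Ici p ∩ Icc (2/3) (5/6))).indicator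
            (fun w => w.2 - w.1) z)) := by
  have hT : {w : ℝ × ℝ | w.1 ≤ p ∧ p ≤ w.2} = Iic p ×ˢ Ici p := by
    ext w; simp [Set.mem_prod]
  -- disjointness of Q3, Q4, Q5
  have d34 : Disjoint (Icc (0:ℝ) (1/6) ×ˢ Icc (5/6:ℝ) 1) (Icc (5/6:ℝ) 1 ×ˢ Icc (5/6:ℝ) 1) := by
    rw [Set.disjoint_left]; rintro z ⟨h1, _⟩ ⟨h2, _⟩
    have := h1.2; have := h2.1; linarith
  have d345 : Disjoint ((Icc (0:ℝ) (1/6) ×ˢ Icc (5/6:ℝ) 1) ∪ (Icc (5/6:ℝ) 1 ×ˢ Icc (5/6:ℝ) 1))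
      (Icc (5/6:ℝ) 1 ×ˢ Icc (0:ℝ) (1/6)) := by
    rw [Set.disjoint_left]; rintro z (⟨_, h1⟩ | ⟨_, h1⟩) ⟨_, h2⟩ <;>
      [skip; skip] <;> (have := h1.1; have := h2.2; linarith)
  -- the per-z identity
  have key : ∀ z : ℝ × ℝ, (z.2 - z.1) *
      ({w : ℝ × ℝ | w.1 ≤ p ∧ p ≤ w.2}.indicator (fun _ => (1:ℝ)) z) * baseDensity z
      = (36 / (1 + 8 * aNorm)) *
        (((Iic p ∩ Icc 0 (1/6)) ×ˢ (Ici p ∩ Ico (1/3) (1/2))).indicator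
            (fun w => 5/6 - w.1 - w.2) z
          + aNorm * ((Iic p ∩ Icc 0 (1/6)) ×ˢ (Ici p ∩ Icc (1/2) (2/3))).indicator
              (fun w => w.2 - w.1) z
          + 2 * aNorm * ((Iic p ∩ Icc 0 (1/6)) ×ˢ (Ici p ∩ Icc (5/6) 1)).indicator
              (fun w => w.2 - w.1) z
          + 2 * aNorm * ((Iic p ∩ Icc (5/6) 1) ×ˢ (Ici p ∩ Icc (5/6) 1)).indicator
              (fun w => w.2 - w.1) z
          + 2 * aNorm * ((Iic p ∩ Icc (5/6) 1) ×ˢ (Ici p ∩ Icc 0 (1/6))).indicator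
              (fun w => w.2 - w.1) z
          + ((Iic p ∩ Icc (1/3) (1/2)) ×ˢ (Ici p ∩ Icc (2/3) (5/6))).indicator
              (fun w => w.2 - w.1) z) := by
    intro z
    rw [hT]
    unfold baseDensity
    rw [indicator_union_of_disjoint d345, indicator_union_of_disjoint d34]
    have h1 := trade_mul p (Icc (0:ℝ) (1/6) ×ˢ Ico (1/3:ℝ) (1/2)) (fun w => (5 - 6 * (w.2 + w.1)) / (6 * (w.2 - w.1))) z
    have h2 := trade_mul p (Icc (0:ℝ) (1/6) ×ˢ Icc (1/2:ℝ) (2/3)) (fun _ => (1:ℝ)) z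
    have h3 := trade_mul p (Icc (0:ℝ) (1/6) ×ˢ Icc (5/6:ℝ) 1) (fun _ => (1:ℝ)) z
    have h4 := trade_mul p (Icc (5/6:ℝ) 1 ×ˢ Icc (5/6:ℝ) 1) (fun _ => (1:ℝ)) z
    have h5 := trade_mul p (Icc (5/6:ℝ) 1 ×ˢ Icc (0:ℝ) (1/6)) (fun _ => (1:ℝ)) z
    have h6 := trade_mul p (Icc (1/3:ℝ) (1/2) ×ˢ Icc (2/3:ℝ) (5/6)) (fun _ => (1:ℝ)) z
    rw [Set.prod_inter_prod] at h1 h2 h3 h4 h5 h6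
    -- rewrite Q1 indicator to the affine version
    have h1' : ((Iic p ∩ Icc 0 (1/6)) ×ˢ (Ici p ∩ Ico (1/3) (1/2))).indicator
        (fun w => (w.2 - w.1) * ((5 - 6 * (w.2 + w.1)) / (6 * (w.2 - w.1)))) z
        = ((Iic p ∩ Icc 0 (1/6)) ×ˢ (Ici p ∩ Ico (1/3) (1/2))).indicator
        (fun w => 5/6 - w.1 - w.2) z := by
      refine congrFun (indicator_congr fun w hw => ?_) z
      have hx : w.1 ≤ 1/6 := hw.1.2.2
      have hy : 1/3 ≤ w.2 := hw.2.2.1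
      have hne : w.2 - w.1 ≠ 0 := by intro h; linarith [sub_eq_zero.mp h]
      field_simp
      ring
    have hmul2 : ((Iic p ∩ Icc 0 (1/6)) ×ˢ (Ici p ∩ Icc (1/2) (2/3))).indicator
        (fun w => (w.2 - w.1) * (1:ℝ)) z
        = ((Iic p ∩ Icc 0 (1/6)) ×ˢ (Ici p ∩ Icc (1/2) (2/3))).indicator
            (fun w => w.2 - w.1) z := by simp
    have hmul3 : ((Iic p ∩ Icc 0 (1/6)) ×ˢ (Ici p ∩ Icc (5/6) 1)).indicator
        (fun w => (w.2 - w.1) * (1:ℝ)) z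
        = ((Iic p ∩ Icc 0 (1/6)) ×ˢ (Ici p ∩ Icc (5/6) 1)).indicator
            (fun w => w.2 - w.1) z := by simp
    have hmul4 : ((Iic p ∩ Icc (5/6) 1) ×ˢ (Ici p ∩ Icc (5/6) 1)).indicator
        (fun w => (w.2 - w.1) * (1:ℝ)) z
        = ((Iic p ∩ Icc (5/6) 1) ×ˢ (Ici p ∩ Icc (5/6) 1)).indicator
            (fun w => w.2 - w.1) z := by simp
    have hmul5 : ((Iic p ∩ Icc (5/6) 1) ×ˢ (Ici p ∩ Icc 0 (1/6))).indicator
        (fun w => (w.2 - w.1) * (1:ℝ)) z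
        = ((Iic p ∩ Icc (5/6) 1) ×ˢ (Ici p ∩ Icc 0 (1/6))).indicator
            (fun w => w.2 - w.1) z := by simp
    have hmul6 : ((Iic p ∩ Icc (1/3) (1/2)) ×ˢ (Ici p ∩ Icc (2/3) (5/6))).indicator
        (fun w => (w.2 - w.1) * (1:ℝ)) z
        = ((Iic p ∩ Icc (1/3) (1/2)) ×ˢ (Ici p ∩ Icc (2/3) (5/6))).indicator
            (fun w => w.2 - w.1) z := by simp
    linear_combination (36 / (1 + 8 * aNorm)) * (h1 + h1') +
      (36 / (1 + 8 * aNorm)) * aNorm * (h2 + hmul2) +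
      (36 / (1 + 8 * aNorm)) * (2 * aNorm) * (h3 + hmul3 + h4 + hmul4 + h5 + hmul5) +
      (36 / (1 + 8 * aNorm)) * (h6 + hmul6)
  unfold expGFT
  rw [integral_congr_ae (Filter.Eventually.of_forall key), integral_const_mul]
  have i1 : Integrable (fun z : ℝ × ℝ =>
      ((Iic p ∩ Icc 0 (1/6)) ×ˢ (Ici p ∩ Ico (1/3) (1/2))).indicator
        (fun w => 5/6 - w.1 - w.2) z) :=
    integrable_piece _ _ (measurableSet_Iic.inter measurableSet_Icc)
      (measurableSet_Ici.inter measurableSet_Ico) 0 (1/6) (1/3) (1/2)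
      inter_subset_right (inter_subset_right.trans Ico_subset_Icc_self) _ (by fun_prop)
  have i2 : Integrable (fun z : ℝ × ℝ =>
      ((Iic p ∩ Icc 0 (1/6)) ×ˢ (Ici p ∩ Icc (1/2) (2/3))).indicator
        (fun w => w.2 - w.1) z) :=
    integrable_piece _ _ (measurableSet_Iic.inter measurableSet_Icc)
      (measurableSet_Ici.inter measurableSet_Icc) 0 (1/6) (1/2) (2/3)
      inter_subset_right inter_subset_right _ (by fun_prop)
  have i3 : Integrable (fun z : ℝ × ℝ =>
      ((Iic p ∩ Icc 0 (1/6)) ×ˢ (Ici p ∩ Icc (5/6) 1)).indicator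
        (fun w => w.2 - w.1) z) :=
    integrable_piece _ _ (measurableSet_Iic.inter measurableSet_Icc)
      (measurableSet_Ici.inter measurableSet_Icc) 0 (1/6) (5/6) 1
      inter_subset_right inter_subset_right _ (by fun_prop)
  have i4 : Integrable (fun z : ℝ × ℝ =>
      ((Iic p ∩ Icc (5/6) 1) ×ˢ (Ici p ∩ Icc (5/6) 1)).indicator
        (fun w => w.2 - w.1) z) :=
    integrable_piece _ _ (measurableSet_Iic.inter measurableSet_Icc)
      (measurableSet_Ici.inter measurableSet_Icc) (5/6) 1 (5/6) 1
      inter_subset_right inter_subset_right _ (by fun_prop)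
  have i5 : Integrable (fun z : ℝ × ℝ =>
      ((Iic p ∩ Icc (5/6) 1) ×ˢ (Ici p ∩ Icc 0 (1/6))).indicator
        (fun w => w.2 - w.1) z) :=
    integrable_piece _ _ (measurableSet_Iic.inter measurableSet_Icc)
      (measurableSet_Ici.inter measurableSet_Icc) (5/6) 1 0 (1/6)
      inter_subset_right inter_subset_right _ (by fun_prop)
  have i6 : Integrable (fun z : ℝ × ℝ =>
      ((Iic p ∩ Icc (1/3) (1/2)) ×ˢ (Ici p ∩ Icc (2/3) (5/6))).indicator
        (fun w => w.2 - w.1) z) :=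
    integrable_piece _ _ (measurableSet_Iic.inter measurableSet_Icc)
      (measurableSet_Ici.inter measurableSet_Icc) (1/3) (1/2) (2/3) (5/6)
      inter_subset_right inter_subset_right _ (by fun_prop)
  rw [integral_add6 _ _ _ _ _ _ i1 (i2.const_mul _) (i3.const_mul _) (i4.const_mul _)
      (i5.const_mul _) i6,
    integral_const_mul, integral_const_mul, integral_const_mul, integral_const_mul]

lemma rectInt_sub (a b c d : ℝ) (hab : a ≤ b) (hcd : c ≤ d) :
    ∫ z : ℝ × ℝ, (Icc a b ×ˢ Icc c d).indicator (fun w => w.2 - w.1) z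
      = (d^2 - c^2)/2 * (b - a) - (b^2 - a^2)/2 * (d - c) := by
  have h := rectInt a b c d 0 (-1) 1 hab hcd
  rw [show (fun w : ℝ × ℝ => (0:ℝ) + -1 * w.1 + 1 * w.2) = (fun w : ℝ × ℝ => w.2 - w.1)
    from funext fun w => by ring] at h
  rw [h]; ring

lemma rectInt_aff (a b c d : ℝ) (hab : a ≤ b) (hcd : c ≤ d) :
    ∫ z : ℝ × ℝ, (Icc a b ×ˢ Icc c d).indicator (fun w => 5/6 - w.1 - w.2) z
      = (5/6 * (d - c) - (d^2 - c^2)/2) * (b - a) - (b^2 - a^2)/2 * (d - c) := by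
  have h := rectInt a b c d (5/6) (-1) (-1) hab hcd
  rw [show (fun w : ℝ × ℝ => (5:ℝ)/6 + -1 * w.1 + -1 * w.2)
      = (fun w : ℝ × ℝ => 5/6 - w.1 - w.2) from funext fun w => by ring] at h
  rw [h]; ring

lemma int_empty_prod (t : Set ℝ) (g : ℝ × ℝ → ℝ) :
    ∫ z : ℝ × ℝ, ((∅ : Set ℝ) ×ˢ t).indicator g z = 0 := by simp

lemma int_prod_empty (s : Set ℝ) (g : ℝ × ℝ → ℝ) :
    ∫ z : ℝ × ℝ, (s ×ˢ (∅ : Set ℝ)).indicator g z = 0 := by simp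

lemma inter_Iic_empty {p a b : ℝ} (h : p < a) : Iic p ∩ Icc a b = ∅ := by
  rw [eq_empty_iff_forall_notMem]; rintro x ⟨h1, h2, _⟩
  exact absurd (lt_of_le_of_lt h1 h) (not_lt.mpr h2)

lemma aNorm_pos : 0 < aNorm := by
  have := Real.log_pos (by norm_num : (1:ℝ) < 27/16)
  unfold aNorm; linarith


/-- Analytic expression of the expected gain from trade of the base distribution
on the intervals (1/6,1/2], (1/2,2/3], (2/3,5/6]. -/
theorem expGFT_base_formula (p : ℝ) :
    (p ∈ Set.Ioc (1/6:ℝ) (1/2) → expGFT p = (2 + 13 * aNorm) / (6 * (1 + 8 * aNorm))) ∧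
    (p ∈ Set.Ioc (1/2:ℝ) (2/3) →
      expGFT p = (-18 * aNorm * p ^ 2 + 3 * aNorm * p + 2 * (1 + 8 * aNorm))
        / (6 * (1 + 8 * aNorm))) ∧
    (p ∈ Set.Ioc (2/3:ℝ) (5/6) →
      expGFT p = (-18 * p ^ 2 + 15 * p + 10 * aNorm) / (6 * (1 + 8 * aNorm))) := by
  have ha := aNorm_pos
  have hne : (1:ℝ) + 8 * aNorm ≠ 0 := by positivity
  refine ⟨fun hp => ?_, fun hp => ?_, fun hp => ?_⟩
  · obtain ⟨hp1, hp2⟩ := hp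
    rw [expGFT_decomp,
      inter_Iic_full (show (1:ℝ)/6 ≤ p from hp1.le),
      inter_Ici_full hp2,
      inter_Ici_full (show p ≤ (5:ℝ)/6 by linarith),
      inter_Iic_empty (show p < (5:ℝ)/6 by linarith),
      inter_Iic_cut hp2,
      inter_Ici_full (show p ≤ (2:ℝ)/3 by linarith),
      int_empty_prod, int_empty_prod,
      rectInt_sub 0 (1/6) (1/2) (2/3) (by norm_num) (by norm_num),
      rectInt_sub 0 (1/6) (5/6) 1 (by norm_num) (by norm_num)]
    rcases le_or_gt p (1/3) with hq | hq
    · rw [inter_Ico_full hq, ind_Ico,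
        rectInt_aff 0 (1/6) (1/3) (1/2) (by norm_num) (by norm_num),
        rect_null_left (1/3) p hq _ measurableSet_Icc]
      rw [div_mul_eq_mul_div, div_eq_div_iff hne (by positivity)]
      ring
    · rw [inter_Ico_cut hq.le, ind_Ico,
        rectInt_aff 0 (1/6) p (1/2) (by norm_num) hp2,
        rectInt_sub (1/3) p (2/3) (5/6) hq.le (by norm_num)]
      rw [div_mul_eq_mul_div, div_eq_div_iff hne (by positivity)]
      ring
  · obtain ⟨hp1, hp2⟩ := hp
    rw [expGFT_decomp,
      inter_Iic_full (show (1:ℝ)/6 ≤ p by linarith),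
      inter_Ico_empty (show (1:ℝ)/2 ≤ p from hp1.le),
      inter_Ici_cut (show (1:ℝ)/2 ≤ p from hp1.le),
      inter_Ici_full (show p ≤ (5:ℝ)/6 by linarith),
      inter_Iic_empty (show p < (5:ℝ)/6 by linarith),
      inter_Iic_full (show (1:ℝ)/2 ≤ p from hp1.le),
      inter_Ici_full hp2,
      int_empty_prod, int_empty_prod, int_prod_empty,
      rectInt_sub 0 (1/6) p (2/3) (by norm_num) hp2,
      rectInt_sub 0 (1/6) (5/6) 1 (by norm_num) (by norm_num),
      rectInt_sub (1/3) (1/2) (2/3) (5/6) (by norm_num) (by norm_num)]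
    rw [div_mul_eq_mul_div, div_eq_div_iff hne (by positivity)]
    ring
  · obtain ⟨hp1, hp2⟩ := hp
    rw [expGFT_decomp,
      inter_Iic_full (show (1:ℝ)/6 ≤ p by linarith),
      inter_Ico_empty (show (1:ℝ)/2 ≤ p by linarith),
      inter_Ici_empty (show (2:ℝ)/3 < p from hp1),
      inter_Ici_full hp2,
      inter_Iic_cut (show p ≤ (1:ℝ) by linarith),
      inter_Iic_full (show (1:ℝ)/2 ≤ p by linarith),
      inter_Ici_cut (show (2:ℝ)/3 ≤ p from hp1.le),
      int_prod_empty, int_prod_empty,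
      rect_null_left (5/6) p hp2 _ (measurableSet_Ici.inter measurableSet_Icc),
      rect_null_left (5/6) p hp2 _ measurableSet_Icc,
      rectInt_sub 0 (1/6) (5/6) 1 (by norm_num) (by norm_num),
      rectInt_sub (1/3) (1/2) p (5/6) (by norm_num) hp2]
    rw [div_mul_eq_mul_div, div_eq_div_iff hne (by positivity)]
    ring
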